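/- Let G be an r-regular simple graph on a finite vertex set V with |V| = n, and let ℓ be an even natural number. Consider the set of all walks of length ℓ in G (i.e. triples (u, v, w) with w a walk from u to v of length ℓ), with the equivalence relation identifying each walk with its conjugate (p ∼ q iff the support of q equals the support of p or the reverse of the support of p). Then twice the number of equivalence classes equals n · (r^ℓ + r^{ℓ/2}). -/

import Mathlib

open List Matrix

section InvolutionCounting

theorem aux_invol {X : Type*} [Fintype X] [DecidableEq X] (σ : X → X)
    (hσ : Function.Involutive σ) :
    2 * Nat.card (Quot (fun p q : X => q = p ∨ q = σ p)) =
      Fintype.card X + Fintype.card {x : X // σ x = x} := by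
  classical
  set R : X → X → Prop := fun p q => q = p ∨ q = σ p with hR
  have hequiv : Equivalence R := by
    constructor
    · intro x; exact Or.inl rfl
    · rintro x y (rfl | rfl)
      all_goals first
        | exact Or.inl rfl
        | exact Or.inr (hσ x).symm
    · rintro x y z hxy hyz
      rcases hxy with rfl | rfl <;> rcases hyz with rfl | rfl
      all_goals first
        | exact Or.inl rfl
        | exact Or.inr rfl
        | exact Or.inl (hσ x)
  haveI : Finite (Quot R) := Quot.finite R
  haveI : Fintype (Quot R) := Fintype.ofFinite _
  have hmk : ∀ x y : X, Quot.mk R y = Quot.mk R x ↔ R x y := by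
    intro x y
    rw [Quot.eq, hequiv.eqvGen_iff]
    constructor
    · intro h; exact hequiv.symm h
    · intro h; exact hequiv.symm h
  rw [Nat.card_eq_fintype_card]
  have h1 : Fintype.card X =
      ∑ c : Quot R, (Finset.univ.filter (fun x => Quot.mk R x = c)).card := by
    rw [← Finset.card_univ (α := X)]
    exact Finset.card_eq_sum_card_fiberwise (fun x _ => Finset.mem_univ _)
  have h2 : Fintype.card {x : X // σ x = x} =
      ∑ c : Quot R, ((Finset.univ.filter (fun x : X => σ x = x)).filter
        (fun x => Quot.mk R x = c)).card := by
    rw [Fintype.card_subtype]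
    exact Finset.card_eq_sum_card_fiberwise (fun x _ => Finset.mem_univ _)
  have key : ∀ c : Quot R,
      (Finset.univ.filter (fun x => Quot.mk R x = c)).card +
      ((Finset.univ.filter (fun x : X => σ x = x)).filter (fun x => Quot.mk R x = c)).card
        = 2 := by
    intro c
    induction c using Quot.ind with
    | _ x =>
      have hfib : (Finset.univ.filter (fun y => Quot.mk R y = Quot.mk R x)) = {x, σ x} := by
        ext y
        simp only [Finset.mem_filter, Finset.mem_univ, true_and, Finset.mem_insert,
          Finset.mem_singleton, hmk]
        exact Iff.rfl
      rw [Finset.filter_filter, hfib]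
      by_cases hx : σ x = x
      · have : (Finset.univ.filter (fun y : X => σ y = y ∧ Quot.mk R y = Quot.mk R x)) = {x} := by
          ext y
          simp only [Finset.mem_filter, Finset.mem_univ, true_and, Finset.mem_singleton, hmk]
          constructor
          · rintro ⟨h1, (rfl | rfl)⟩
            · rfl
            · exact hx
          · rintro rfl; exact ⟨hx, Or.inl rfl⟩
        rw [this, hx, Finset.insert_eq_self.mpr (Finset.mem_singleton_self x)]
        simp
      · have hcard : ({x, σ x} : Finset X).card = 2 := by
          rw [Finset.card_insert_of_notMem (by simpa using fun h => hx h.symm)]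
          simp
        have : (Finset.univ.filter (fun y : X => σ y = y ∧ Quot.mk R y = Quot.mk R x)) = ∅ := by
          ext y
          simp only [Finset.mem_filter, Finset.mem_univ, true_and, Finset.notMem_empty,
            iff_false, not_and, hmk]
          rintro h1 (rfl | rfl)
          · exact hx h1
          · exact hx ((hσ x) ▸ h1).symm
        rw [this, hcard]
        simp
  calc 2 * Fintype.card (Quot R) = ∑ _c : Quot R, 2 := by
        rw [Finset.sum_const, smul_eq_mul, mul_comm, Finset.card_univ]
      _ = Fintype.card X + Fintype.card {x : X // σ x = x} := by
        rw [h1, h2, ← Finset.sum_add_distrib]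
        exact Finset.sum_congr rfl fun c _ => (key c).symm

end InvolutionCounting

section WalkChains

variable {V : Type*} [Fintype V] [DecidableEq V] (G : SimpleGraph V) [DecidableRel G.Adj]

/-- Turn a chain (adjacency-respecting list) into a walk. -/
def toWalk : (u : V) → (l : List V) → List.Chain G.Adj u l → Σ v : V, G.Walk u v
  | u, [], _ => ⟨u, SimpleGraph.Walk.nil⟩
  | _, b :: l, h =>
    ⟨(toWalk b l (List.chain_cons.mp h).2).1,
      SimpleGraph.Walk.cons (List.chain_cons.mp h).1 (toWalk b l (List.chain_cons.mp h).2).2⟩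

lemma toWalk_support : ∀ (u : V) (l : List V) (h : List.Chain G.Adj u l),
    (toWalk G u l h).2.support = u :: l
  | _, [], _ => rfl
  | u, b :: l, h => by
    simp only [toWalk, SimpleGraph.Walk.support_cons]
    rw [toWalk_support b l (List.chain_cons.mp h).2]

lemma toWalk_eq : ∀ (l : List V) {u v : V} (w : G.Walk u v) (hl : w.support = u :: l)
    (h : List.Chain G.Adj u l), toWalk G u l h = ⟨v, w⟩ := by
  intro l
  induction l with
  | nil =>
    intro u v w hl h
    cases w with
    | nil => rfl
    | cons ha w' =>
      rw [SimpleGraph.Walk.support_cons] at hl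
      exact absurd (by simpa using hl) w'.support_ne_nil
  | cons b l' ih =>
    intro u v w hl h
    cases w with
    | nil => simp at hl
    | cons ha w' =>
      rename_i c
      rw [SimpleGraph.Walk.support_cons] at hl
      have h2 : w'.support = b :: l' := by simpa using hl
      have h3 := (SimpleGraph.Walk.support_eq_cons w').symm.trans h2
      injection h3 with h4 h5
      subst h4
      simp only [toWalk]
      rw [ih w' h2 (List.chain_cons.mp h).2]

/-- The type of chains with `k + 1` vertices (i.e. `k` edges). -/
abbrev Chains (k : ℕ) : Type _ := {l : List V // l.Chain' G.Adj ∧ l.length = k + 1}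

noncomputable def walkEquivChains (k : ℕ) :
    (Σ u : V, Σ v : V, {w : G.Walk u v // w.length = k}) ≃ Chains G k := by
  apply Equiv.ofBijective
    (fun x => (⟨x.2.2.1.support, x.2.2.1.isChain_adj_support,
      by rw [SimpleGraph.Walk.length_support, x.2.2.2]⟩ : Chains G k))
  constructor
  · rintro ⟨u, v, w, hw⟩ ⟨u', v', w', hw'⟩ hE
    have hs : w.support = w'.support := congrArg Subtype.val hE
    have hu : u = u' := by
      have := (SimpleGraph.Walk.support_eq_cons w).symm.trans
        (hs.trans (SimpleGraph.Walk.support_eq_cons w'))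
      exact (List.cons.injEq _ _ _ _ ▸ this).1
    subst hu
    have ht : w.support.tail = w'.support.tail := by rw [hs]
    have hch : List.Chain G.Adj u w.support.tail := by
      have := w.isChain_adj_support
      rwa [SimpleGraph.Walk.support_eq_cons w] at this
    have e1 := toWalk_eq G w.support.tail w (SimpleGraph.Walk.support_eq_cons w) hch
    have hch' : List.Chain G.Adj u w'.support.tail := ht ▸ hch
    have e2 := toWalk_eq G w'.support.tail w' (SimpleGraph.Walk.support_eq_cons w') hch'
    have e3 : toWalk G u w.support.tail hch = toWalk G u w'.support.tail hch' := by
      congr 1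
    have e4 : (⟨v, w⟩ : Σ x : V, G.Walk u x) = ⟨v', w'⟩ := by
      rw [← e1, e3, e2]
    obtain ⟨rfl, hw2⟩ := Sigma.ext_iff.mp e4
    have : w = w' := eq_of_heq hw2
    subst this
    rfl
  · rintro ⟨l, hch, hlen⟩
    cases l with
    | nil => simp at hlen
    | cons a t =>
      have hc : List.Chain G.Adj a t := hch
      refine ⟨⟨a, (toWalk G a t hc).1, (toWalk G a t hc).2, ?_⟩, ?_⟩
      · have := congrArg List.length (toWalk_support G a t hc)
        rw [SimpleGraph.Walk.length_support] at this
        simp only [List.length_cons] at this hlen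
        omega
      · apply Subtype.ext
        exact toWalk_support G a t hc

lemma card_walks {r : ℕ} (hreg : G.IsRegularOfDegree r) (k : ℕ) :
    Fintype.card (Σ u : V, Σ v : V, {w : G.Walk u v // w.length = k}) =
      Fintype.card V * r ^ k := by
  have hmv : ∀ j : ℕ, (G.adjMatrix ℕ ^ j) *ᵥ (Function.const V 1) =
      Function.const V (r ^ j) := by
    intro j
    induction j with
    | zero => funext x; simp [Matrix.one_mulVec]
    | succ n ih =>
      rw [pow_succ', ← Matrix.mulVec_mulVec, ih]
      funext x
      rw [SimpleGraph.adjMatrix_mulVec_const_apply_of_regular hreg]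
      simp [pow_succ, mul_comm]
  rw [Fintype.card_sigma]
  have hrow : ∀ u : V, Fintype.card (Σ v : V, {w : G.Walk u v // w.length = k}) = r ^ k := by
    intro u
    rw [Fintype.card_sigma]
    have h2 : ∀ v : V, Fintype.card {w : G.Walk u v // w.length = k} =
        (G.adjMatrix ℕ ^ k) u v := by
      intro v
      rw [SimpleGraph.adjMatrix_pow_apply_eq_card_walk]
      rfl
    calc ∑ v : V, Fintype.card {w : G.Walk u v // w.length = k}
        = ∑ v : V, (G.adjMatrix ℕ ^ k) u v := Finset.sum_congr rfl fun v _ => h2 v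
      _ = ((G.adjMatrix ℕ ^ k) *ᵥ (Function.const V 1)) u := by
          simp [Matrix.mulVec, dotProduct]
      _ = r ^ k := by rw [hmv k]; rfl
  rw [Finset.sum_congr rfl fun u _ => hrow u, Finset.sum_const, smul_eq_mul, Finset.card_univ]

def chainReverse (k : ℕ) : Chains G k → Chains G k := fun c =>
  ⟨c.1.reverse, List.isChain_reverse.mpr (c.2.1.imp fun _ _ h => h.symm), by simp [c.2.2]⟩

lemma chainReverse_involutive (k : ℕ) : Function.Involutive (chainReverse G k) := by
  intro c
  apply Subtype.ext
  simp [chainReverse]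

lemma reverse_drop' (l : List V) (n : ℕ) :
    l.reverse.take (l.length - n) = (l.drop n).reverse := by
  have h : l.reverse = (l.drop n).reverse ++ (l.take n).reverse := by
    rw [← List.reverse_append, List.take_append_drop]
  rw [h, List.take_left' (by simp)]

def toFull (m : ℕ) (c : Chains G m) : Chains G (m + m) := by
  refine ⟨c.1.tail.reverse ++ c.1, ?_, ?_⟩
  · rcases c with ⟨l, hch, hlen⟩
    cases l with
    | nil => simp at hlen
    | cons b t =>
      show List.Chain' G.Adj (t.reverse ++ b :: t)
      apply List.IsChain.append
      · exact List.isChain_reverse.mpr ((List.IsChain.tail hch).imp fun _ _ h => h.symm)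
      · exact hch
      · intro x hx y hy
        cases t with
        | nil => simp at hx
        | cons a t' =>
          simp only [List.getLast?_reverse, List.head?_cons, Option.mem_def,
            Option.some.injEq] at hx hy
          subst hx; subst hy
          exact (List.isChain_cons_cons.mp hch).1.symm
  · rcases c with ⟨l, hch, hlen⟩
    simp only [List.length_append, List.length_reverse, List.length_tail, hlen]
    omega

lemma toFull_pal (m : ℕ) (c : Chains G m) : ((toFull G m c).1).reverse = (toFull G m c).1 := by
  show (c.1.tail.reverse ++ c.1).reverse = c.1.tail.reverse ++ c.1
  rcases c with ⟨l, hch, hlen⟩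
  cases l with
  | nil => simp at hlen
  | cons b t => simp

noncomputable def palEquiv (m : ℕ) :
    Chains G m ≃ {c : Chains G (m + m) // c.1.reverse = c.1} := by
  apply Equiv.ofBijective (fun c => ⟨toFull G m c, toFull_pal G m c⟩)
  constructor
  · rintro ⟨l, hch, hlen⟩ ⟨l', hch', hlen'⟩ hE
    have h1 : l.tail.reverse ++ l = l'.tail.reverse ++ l' :=
      congrArg (fun x => x.1.1) hE
    apply Subtype.ext
    exact (List.append_inj' h1 (by rw [hlen, hlen'])).2
  · rintro ⟨⟨p, hch, hlen⟩, hpal⟩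
    have hpal' : p.reverse = p := hpal
    refine ⟨⟨p.drop m, hch.drop m, by simp [hlen]; omega⟩, ?_⟩
    apply Subtype.ext
    apply Subtype.ext
    show (p.drop m).tail.reverse ++ p.drop m = p
    rw [List.tail_drop]
    have h3 : (p.drop (m + 1)).reverse = p.take m := by
      rw [← reverse_drop', hpal', hlen]
      congr 1
      omega
    rw [h3, List.take_append_drop]

end WalkChains

/-- Let `G` be an `r`-regular simple graph on `n` vertices and `ℓ` even. On the set of all
walks of length `ℓ` in `G`, identify each walk with its conjugate (`p ∼ q` iff the support
of `q` equals the support of `p` or the reverse of the support of `p`). Then twice the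
number of equivalence classes equals `n · (r^ℓ + r^{ℓ/2})`. -/
theorem two_mul_card_walk_classes_even {V : Type*} [Fintype V] [DecidableEq V]
    (G : SimpleGraph V) [DecidableRel G.Adj] (r : ℕ) (hreg : G.IsRegularOfDegree r)
    (ℓ : ℕ) (hℓ : Even ℓ) :
    2 * Nat.card (Quot (fun p q : Σ u : V, Σ v : V, {w : G.Walk u v // w.length = ℓ} =>
        q.2.2.1.support = p.2.2.1.support ∨ q.2.2.1.support = p.2.2.1.support.reverse)) =
      Fintype.card V * (r ^ ℓ + r ^ (ℓ / 2)) := by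
  classical
  obtain ⟨m, rfl⟩ := hℓ
  set k := m + m with hk
  let e := walkEquivChains G k
  let σ := chainReverse G k
  haveI : Fintype (Chains G k) := Fintype.ofEquiv _ e
  have hiff : ∀ p q : (Σ u : V, Σ v : V, {w : G.Walk u v // w.length = k}),
      (q.2.2.1.support = p.2.2.1.support ∨ q.2.2.1.support = p.2.2.1.support.reverse) ↔
      (e q = e p ∨ e q = σ (e p)) := by
    intro p q
    constructor
    · rintro (h | h)
      · exact Or.inl (Subtype.ext h)
      · exact Or.inr (Subtype.ext h)
    · rintro (h | h)
      · exact Or.inl (congrArg Subtype.val h)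
      · exact Or.inr (congrArg Subtype.val h)
  have equivQuot := Quot.congr (rb := fun x y : Chains G k => y = x ∨ y = σ x) e hiff
  rw [Nat.card_congr equivQuot, aux_invol σ (chainReverse_involutive G k)]
  have hcard1 : Fintype.card (Chains G k) = Fintype.card V * r ^ k := by
    rw [← Fintype.card_congr e]
    exact card_walks G hreg k
  have efix : {c : Chains G k // σ c = c} ≃
      (Σ u : V, Σ v : V, {w : G.Walk u v // w.length = m}) :=
    (Equiv.subtypeEquivRight (fun c => Subtype.ext_iff)).trans
      ((palEquiv G m).symm.trans (walkEquivChains G m).symm)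
  have hcard2 : Fintype.card {c : Chains G k // σ c = c} = Fintype.card V * r ^ m := by
    rw [Fintype.card_congr efix]
    exact card_walks G hreg m
  rw [hcard1, hcard2]
  have hdiv : (m + m) / 2 = m := by omega
  rw [hk, hdiv, Nat.mul_add]
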